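/- Let μ be a translation-invariant percolation on ℤ². Then μ-almost surely, for every b ∈ ℤ and every cluster C of G_η such that the set {x ∈ ℤ : (x,b) ∈ C} is infinite, the set {x ∈ ℤ : the vertical edge {(x,b−1),(x,b)} is open and (x,b) ∈ C} is either empty or infinite. -/

import Mathlib

open MeasureTheory
open scoped ENNReal

/-- Vertices of the square lattice `ℤ²`. -/
abbrev Vertex : Type := ℤ × ℤ

/-- Edges of `ℤ²`, encoded as a base vertex together with a direction:
`false` is the horizontal edge from `v` to `v + (1,0)`, `true` the vertical
edge from `v` to `v + (0,1)`. -/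
abbrev Edge : Type := Vertex × Bool

/-- Percolation configurations `η : E(ℤ²) → {0,1}`. -/
abbrev Config : Type := Edge → Bool

/-- The displacement vector of an edge with direction `d`. -/
def edgeDir (d : Bool) : Vertex := if d then (0, 1) else (1, 0)

/-- `joins e u v` says that the edge `e` has endpoints `u` and `v`. -/
def joins (e : Edge) (u v : Vertex) : Prop :=
  (e.1 = u ∧ u + edgeDir e.2 = v) ∨ (e.1 = v ∧ v + edgeDir e.2 = u)

/-- The open subgraph `G_η` of `ℤ²`: two vertices are adjacent iff some open
edge joins them. -/
def openGraph (η : Config) : SimpleGraph Vertex where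
  Adj u v := u ≠ v ∧ ∃ e : Edge, η e = true ∧ joins e u v
  symm := by
    constructor
    rintro u v ⟨hne, e, he, hj⟩
    exact ⟨hne.symm, e, he, hj.symm⟩
  loopless := by
    constructor
    rintro u ⟨hne, -⟩
    exact hne rfl

/-- The half-plane restriction `HP_b(G_η)`: keep only open edges with both
endpoints having second coordinate `≥ b`. -/
def hpGraph (b : ℤ) (η : Config) : SimpleGraph Vertex where
  Adj u v := b ≤ u.2 ∧ b ≤ v.2 ∧ (openGraph η).Adj u v
  symm := by
    constructor
    rintro u v ⟨hu, hv, h⟩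
    exact ⟨hv, hu, h.symm⟩
  loopless := by
    constructor
    rintro u ⟨-, -, h⟩
    exact (openGraph η).ne_of_adj h rfl

/-- `C` is a cluster (connected component) of `G_η`. -/
def IsCluster (η : Config) (C : Set Vertex) : Prop :=
  ∃ v : Vertex, C = {u | (openGraph η).Reachable v u}

/-- `C` is a cluster of the half-plane restriction `HP_b(G_η)`: the component
of some vertex lying in the half-plane `{y ≥ b}`. -/
def IsClusterHP (b : ℤ) (η : Config) (C : Set Vertex) : Prop :=
  ∃ v : Vertex, b ≤ v.2 ∧ C = {u | (hpGraph b η).Reachable v u}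

/-- The dual configuration `η*`: a dual edge is open iff the primal edge it
crosses is closed.  The dual edge with base `(a,c)` and direction `false`
(going to `(a+1,c)`) crosses the primal vertical edge `{(a+1,c),(a+1,c+1)}`;
the dual edge with base `(a,c)` and direction `true` (going to `(a,c+1)`)
crosses the primal horizontal edge `{(a,c+1),(a+1,c+1)}`. -/
def dualConfig (η : Config) : Config := fun e =>
  if e.2 then !η ((e.1.1, e.1.2 + 1), false) else !η ((e.1.1 + 1, e.1.2), true)

/-- Translation of configurations: `(T_t η)(e) = η (e - t)`. -/
def shift (t : Vertex) (η : Config) : Config := fun e => η (e.1 - t, e.2)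

-- measurability
lemma measurableSet_edge (e : Edge) : MeasurableSet {η : Config | η e = true} := by
  have : {η : Config | η e = true} = (fun η : Config => η e) ⁻¹' {true} := by
    ext η; simp
  rw [this]
  exact (measurable_pi_apply e) (measurableSet_singleton true)

lemma measurableSet_adj (u v : Vertex) :
    MeasurableSet {η : Config | (openGraph η).Adj u v} := by
  have : {η : Config | (openGraph η).Adj u v}
      = {_η : Config | u ≠ v} ∩ ⋃ e : Edge, ({η : Config | η e = true} ∩ {_η : Config | joins e u v}) := by
    ext η
    constructor
    · rintro ⟨h, e, he, hj⟩
      exact ⟨h, Set.mem_iUnion.2 ⟨e, he, hj⟩⟩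
    · rintro ⟨h, he⟩
      obtain ⟨e, he, hj⟩ := Set.mem_iUnion.1 he
      exact ⟨h, e, he, hj⟩
  rw [this]
  exact (MeasurableSet.const _).inter
    (MeasurableSet.iUnion fun e => (measurableSet_edge e).inter (MeasurableSet.const _))

lemma measurableSet_chain (l : List Vertex) (v : Vertex) :
    MeasurableSet {η : Config | List.Chain (openGraph η).Adj v l} := by
  induction l generalizing v with
  | nil =>
      have : {η : Config | List.Chain (openGraph η).Adj v []} = Set.univ := by
        ext η; simp [List.Chain]
      rw [this]; exact MeasurableSet.univ
  | cons a t ih =>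
      have : {η : Config | List.Chain (openGraph η).Adj v (a :: t)}
          = {η : Config | (openGraph η).Adj v a} ∩ {η : Config | List.Chain (openGraph η).Adj a t} := by
        ext η; simp [List.Chain]
      rw [this]
      exact (measurableSet_adj v a).inter (ih a)

lemma measurableSet_reach (v u : Vertex) :
    MeasurableSet {η : Config | (openGraph η).Reachable v u} := by
  have : {η : Config | (openGraph η).Reachable v u}
      = ⋃ l : List Vertex,
          ({η : Config | List.Chain (openGraph η).Adj v l}
            ∩ {_η : Config | (v :: l).getLast (List.cons_ne_nil v l) = u}) := by
    ext η
    simp only [Set.mem_iUnion, Set.mem_inter_iff, Set.mem_setOf_eq]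
    rw [SimpleGraph.reachable_iff_reflTransGen]
    constructor
    · intro h
      obtain ⟨l, h1, h2⟩ := List.exists_isChain_cons_of_relationReflTransGen h
      exact ⟨l, h1, h2⟩
    · rintro ⟨l, h1, h2⟩
      exact List.relationReflTransGen_of_exists_isChain_cons l h1 h2
  rw [this]
  exact MeasurableSet.iUnion fun l => (measurableSet_chain l v).inter (MeasurableSet.const _)

-- shift covariance
lemma joins_sub (e : Edge) (t u v : Vertex) :
    joins (e.1 - t, e.2) (u - t) (v - t) ↔ joins e u v := by
  unfold joins
  have h1 : ∀ a b : Vertex, a - t = b - t ↔ a = b := fun a b => sub_left_inj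
  have h2 : ∀ (a b : Vertex) (d : Vertex), a - t + d = b - t ↔ a + d = b := by
    intro a b d
    rw [sub_add_eq_add_sub, sub_left_inj]
  simp only [h1, h2]

lemma shift_adj (t : Vertex) (η : Config) (u v : Vertex) :
    (openGraph (shift t η)).Adj u v ↔ (openGraph η).Adj (u - t) (v - t) := by
  constructor
  · rintro ⟨hne, e, he, hj⟩
    refine ⟨fun h => hne (sub_left_inj.1 h), (e.1 - t, e.2), he, ?_⟩
    exact (joins_sub e t u v).2 hj
  · rintro ⟨hne, e, he, hj⟩
    refine ⟨fun h => hne (by rw [h]), (e.1 + t, e.2), ?_, ?_⟩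
    · show η ((e.1 + t) - t, e.2) = true
      rwa [add_sub_cancel_right]
    · have := (joins_sub (e.1 + t, e.2) t u v)
      rw [show ((e.1 + t, e.2) : Edge).1 - t = e.1 from add_sub_cancel_right e.1 t] at this
      exact this.1 hj

lemma shift_reach (t : Vertex) (η : Config) (u v : Vertex) :
    (openGraph (shift t η)).Reachable u v ↔ (openGraph η).Reachable (u - t) (v - t) := by
  rw [SimpleGraph.reachable_iff_reflTransGen, SimpleGraph.reachable_iff_reflTransGen]
  constructor
  · intro h
    exact Relation.ReflTransGen.lift (fun w => w - t)
      (fun a b hab => (shift_adj t η a b).1 hab) _ _ h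
  · intro h
    have := Relation.ReflTransGen.lift (r := (openGraph η).Adj) (p := (openGraph (shift t η)).Adj) (fun w : Vertex => w + t)
      (fun a b hab => by
        show (openGraph (shift t η)).Adj (a + t) (b + t)
        rw [shift_adj t η (a + t) (b + t), add_sub_cancel_right, add_sub_cancel_right]
        exact hab) _ _ h
    simpa [sub_add_cancel, Function.onFun] using this

-- events
def RSet (v u : Vertex) : Set Config := {η | (openGraph η).Reachable v u}

def Mev (b m : ℤ) : Set Config :=
  {η : Config | {x : ℤ | (openGraph η).Reachable (m, b) (x, b)}.Infinite}
  ∩ {η : Config | η ((m, b - 1), true) = true}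
  ∩ {η : Config | ∀ x : ℤ, η ((x, b - 1), true) = true →
      (openGraph η).Reachable (m, b) (x, b) → x ≤ m}

lemma infinite_iff_finset (S : Set ℤ) :
    S.Infinite ↔ ∀ F : Finset ℤ, ∃ x, x ∈ S ∧ x ∉ F := by
  constructor
  · intro h F
    have : ¬ S ⊆ ↑F := fun hs => h (Set.Finite.subset F.finite_toSet hs)
    obtain ⟨x, hx, hxF⟩ := Set.not_subset.1 this
    exact ⟨x, hx, by simpa using hxF⟩
  · intro h
    by_contra hfin
    rw [Set.not_infinite] at hfin
    obtain ⟨x, hx, hxF⟩ := h hfin.toFinset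
    exact hxF (hfin.mem_toFinset.2 hx)

lemma measurableSet_Mev (b m : ℤ) : MeasurableSet (Mev b m) := by
  unfold Mev
  refine MeasurableSet.inter (MeasurableSet.inter ?_ (measurableSet_edge _)) ?_
  · have : {η : Config | {x : ℤ | (openGraph η).Reachable (m, b) (x, b)}.Infinite}
        = ⋂ F : Finset ℤ, ⋃ x : ℤ, ⋃ _ : x ∉ F, RSet (m, b) (x, b) := by
      ext η
      simp only [Set.mem_setOf_eq, Set.mem_iInter, Set.mem_iUnion, infinite_iff_finset, RSet]
      constructor
      · intro h F; obtain ⟨x, h1, h2⟩ := h F; exact ⟨x, h2, h1⟩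
      · intro h F; obtain ⟨x, h2, h1⟩ := h F; exact ⟨x, h1, h2⟩
    rw [this]
    exact MeasurableSet.iInter fun F => MeasurableSet.iUnion fun x =>
      MeasurableSet.iUnion fun _ => measurableSet_reach _ _
  · have : {η : Config | ∀ x : ℤ, η ((x, b - 1), true) = true →
        (openGraph η).Reachable (m, b) (x, b) → x ≤ m}
        = ⋂ x : ℤ, (if x ≤ m then Set.univ else
            ({η : Config | η ((x, b - 1), true) = true} ∩ RSet (m, b) (x, b))ᶜ) := by
      ext η
      simp only [Set.mem_setOf_eq, Set.mem_iInter]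
      constructor
      · intro h x
        split_ifs with hx
        · trivial
        · intro hmem
          exact hx (h x hmem.1 hmem.2)
      · intro h x he hr
        by_contra hx
        have := h x
        rw [if_neg hx] at this
        exact this ⟨he, hr⟩
    rw [this]
    refine MeasurableSet.iInter fun x => ?_
    split_ifs
    · exact MeasurableSet.univ
    · exact ((measurableSet_edge _).inter (measurableSet_reach _ _)).compl

-- shift preimage computations
lemma shift_apply' (s x b' : ℤ) (η : Config) (d : Bool) :
    shift (s, 0) η ((x, b'), d) = η ((x - s, b'), d) := by
  show η ((x, b') - (s, 0), d) = _
  norm_num [Prod.ext_iff]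

lemma shift_reach' (s m b x b2 : ℤ) (η : Config) :
    (openGraph (shift (s, 0) η)).Reachable (m, b) (x, b2) ↔
      (openGraph η).Reachable (m - s, b) (x - s, b2) := by
  rw [shift_reach]
  norm_num [Prod.ext_iff]

lemma infinite_sub_iff (S : Set ℤ) (s : ℤ) :
    {x : ℤ | x - s ∈ S}.Infinite ↔ S.Infinite := by
  have himg : {x : ℤ | x - s ∈ S} = (fun y => y + s) '' S := by
    ext x
    simp only [Set.mem_setOf_eq, Set.mem_image]
    constructor
    · intro h; exact ⟨x - s, h, by omega⟩
    · rintro ⟨y, hy, rfl⟩; simpa using hy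
  rw [himg]
  exact Set.infinite_image_iff (Set.injOn_of_injective (add_left_injective s))

lemma shift_mem_Mev (b m s : ℤ) (η : Config) :
    shift (s, 0) η ∈ Mev b m ↔ η ∈ Mev b (m - s) := by
  unfold Mev
  simp only [Set.mem_inter_iff, Set.mem_setOf_eq, shift_apply', shift_reach']
  constructor
  · rintro ⟨⟨h1, h2⟩, h3⟩
    refine ⟨⟨?_, h2⟩, ?_⟩
    · exact (infinite_sub_iff {x : ℤ | (openGraph η).Reachable (m - s, b) (x, b)} s).1 h1
    · intro y he hr
      have := h3 (y + s) (by rwa [add_sub_cancel_right]) (by rwa [add_sub_cancel_right])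
      omega
  · rintro ⟨⟨h1, h2⟩, h3⟩
    refine ⟨⟨?_, h2⟩, ?_⟩
    · exact (infinite_sub_iff {x : ℤ | (openGraph η).Reachable (m - s, b) (x, b)} s).2 h1
    · intro x he hr
      have := h3 (x - s) he hr
      omega

lemma shift_mem_RSet (b m : ℤ) (η : Config) :
    shift (m, 0) η ∈ RSet (m, b) (0, b) ↔ η ∈ RSet (0, b) (-m, b) := by
  unfold RSet
  simp only [Set.mem_setOf_eq]
  have := shift_reach' m m b 0 b η
  rw [this]
  norm_num

-- the events Mev b m are null
lemma Mev_null (μ : Measure Config) [IsProbabilityMeasure μ]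
    (hinv : ∀ t : Vertex, MeasurePreserving (shift t) μ μ) (b m : ℤ) :
    μ (Mev b m) = 0 := by
  suffices h0 : μ (Mev b 0) = 0 by
    have hpre : shift (m, 0) ⁻¹' Mev b m = Mev b 0 := by
      ext η
      rw [Set.mem_preimage, shift_mem_Mev]
      norm_num
    have := (hinv (m, 0)).measure_preimage (measurableSet_Mev b m).nullMeasurableSet
    rw [hpre, h0] at this
    exact this.symm
  -- main mass-transport argument
  by_contra hne
  set g : ℤ → ℝ≥0∞ := fun x => μ (Mev b 0 ∩ RSet (0, b) (x, b)) with hg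
  set N : ℤ → Set Config := fun m => Mev b m ∩ RSet (m, b) (0, b) with hN
  have hNmeas : ∀ m, MeasurableSet (N m) :=
    fun m => (measurableSet_Mev b m).inter (measurableSet_reach _ _)
  have hNdisj : Pairwise (Function.onFun Disjoint N) := by
    intro m1 m2 hne12
    rw [Function.onFun, Set.disjoint_left]
    rintro η ⟨⟨⟨-, he1⟩, hub1⟩, hr1⟩ ⟨⟨⟨-, he2⟩, hub2⟩, hr2⟩
    have h12 : (openGraph η).Reachable (m1, b) (m2, b) :=
      (hr1 : (openGraph η).Reachable _ _).trans
        ((hr2 : (openGraph η).Reachable _ _).symm)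
    have l1 : m2 ≤ m1 := hub1 m2 he2 h12
    have l2 : m1 ≤ m2 := hub2 m1 he1 h12.symm
    exact hne12 (le_antisymm l2 l1)
  have hNval : ∀ m : ℤ, μ (N m) = g (-m) := by
    intro m
    have hpre : shift (m, 0) ⁻¹' N m = Mev b 0 ∩ RSet (0, b) (-m, b) := by
      ext η
      rw [Set.mem_preimage, hN]
      simp only [Set.mem_inter_iff]
      rw [shift_mem_Mev, shift_mem_RSet]
      norm_num
    have := (hinv (m, 0)).measure_preimage (hNmeas m).nullMeasurableSet
    rw [hpre] at this
    exact this.symm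
  have hsum_le : ∑' x : ℤ, g x ≤ 1 := by
    have h1 : ∑' m : ℤ, μ (N m) = μ (⋃ m, N m) := (measure_iUnion hNdisj hNmeas).symm
    have h2 : μ (⋃ m, N m) ≤ 1 := prob_le_one
    have h3 : ∑' m : ℤ, μ (N m) = ∑' m : ℤ, g (-m) := by
      exact tsum_congr hNval
    have h4 : ∑' m : ℤ, g (-m) = ∑' x : ℤ, g x := (Equiv.neg ℤ).tsum_eq g
    rw [← h4, ← h3, h1]
    exact h2
  -- lower bound: the sum is infinite
  have hRx : ∀ x : ℤ, MeasurableSet (Mev b 0 ∩ RSet (0, b) (x, b)) :=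
    fun x => (measurableSet_Mev b 0).inter (measurableSet_reach _ _)
  have hsum_top : (⊤ : ℝ≥0∞) ≤ ∑' x : ℤ, g x := by
    have hgx : ∀ x : ℤ, g x = ∫⁻ η, (Mev b 0 ∩ RSet (0, b) (x, b)).indicator 1 η ∂μ :=
      fun x => (lintegral_indicator_one (hRx x)).symm
    calc (⊤ : ℝ≥0∞) = ⊤ * μ (Mev b 0) := (ENNReal.top_mul hne).symm
    _ = ∫⁻ η, (Mev b 0).indicator (fun _ => ⊤) η ∂μ :=
        (lintegral_indicator_const (measurableSet_Mev b 0) ⊤).symm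
    _ ≤ ∫⁻ η, ∑' x : ℤ, (Mev b 0 ∩ RSet (0, b) (x, b)).indicator 1 η ∂μ := by
        apply lintegral_mono
        intro η
        show (Mev b 0).indicator (fun _ => (⊤ : ℝ≥0∞)) η
          ≤ ∑' x : ℤ, (Mev b 0 ∩ RSet (0, b) (x, b)).indicator 1 η
        by_cases hη : η ∈ Mev b 0
        · rw [Set.indicator_of_mem hη]
          have hS : {x : ℤ | η ∈ RSet (0, b) (x, b)}.Infinite := hη.1.1
          have heq : ∀ x : ℤ, (Mev b 0 ∩ RSet (0, b) (x, b)).indicator 1 η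
              = {x : ℤ | η ∈ RSet (0, b) (x, b)}.indicator (fun _ => (1 : ℝ≥0∞)) x := by
            intro x
            by_cases hx : η ∈ RSet (0, b) (x, b)
            · have h1 : η ∈ Mev b 0 ∩ RSet (0, b) (x, b) := ⟨hη, hx⟩
              have h2 : x ∈ {x : ℤ | η ∈ RSet (0, b) (x, b)} := hx
              rw [Set.indicator_of_mem h1, Set.indicator_of_mem h2]
              rfl
            · have h2 : x ∉ {x : ℤ | η ∈ RSet (0, b) (x, b)} := hx
              rw [Set.indicator_of_notMem (fun hc => hx hc.2),
                Set.indicator_of_notMem h2]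
          rw [tsum_congr heq, ← tsum_subtype]
          have : Infinite ↥{x : ℤ | η ∈ RSet (0, b) (x, b)} :=
            Set.infinite_coe_iff.2 hS
          rw [ENNReal.tsum_const_eq_top_of_ne_zero one_ne_zero]
        · rw [Set.indicator_of_notMem hη]
          exact zero_le
    _ = ∑' x : ℤ, g x := by
        rw [lintegral_tsum (f := fun (x : ℤ) (η : Config) =>
          (Mev b 0 ∩ RSet (0, b) (x, b)).indicator 1 η)
          (fun x => ((measurable_const.indicator (hRx x)).aemeasurable))]
        exact tsum_congr fun x => (hgx x).symm
  have : (⊤ : ℝ≥0∞) ≤ 1 := le_trans hsum_top hsum_le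
  simp at this

/-- For a translation-invariant percolation on `ℤ²`, almost
surely, for every `b` and every cluster `C` of `G_η` meeting the line `y = b`
in infinitely many vertices, the set of `x` such that the vertical edge
`{(x,b-1),(x,b)}` is open and `(x,b) ∈ C` is empty or infinite. -/
theorem downward_edges_from_infinite_baseline_empty_or_infinite
    (μ : Measure Config) [IsProbabilityMeasure μ]
    (hinv : ∀ t : Vertex, MeasurePreserving (shift t) μ μ) :
    ∀ᵐ η ∂μ, ∀ (b : ℤ) (C : Set Vertex), IsCluster η C →
      {x : ℤ | (x, b) ∈ C}.Infinite →
      ({x : ℤ | η ((x, b - 1), true) = true ∧ (x, b) ∈ C} = ∅ ∨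
       {x : ℤ | η ((x, b - 1), true) = true ∧ (x, b) ∈ C}.Infinite) := by
  have hnull : ∀ b m : ℤ, μ (Mev b m) = 0 := Mev_null μ hinv
  have hae : ∀ᵐ η ∂μ, ∀ b m : ℤ, η ∉ Mev b m := by
    rw [ae_all_iff]
    intro b
    rw [ae_all_iff]
    intro m
    exact measure_eq_zero_iff_ae_notMem.1 (hnull b m)
  filter_upwards [hae] with η hη b C hC hinf
  obtain ⟨v, rfl⟩ := hC
  by_contra hcon
  push_neg at hcon
  obtain ⟨hne, hninf⟩ := hcon
  set D : Set ℤ := {x : ℤ | η ((x, b - 1), true) = true ∧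
    (x, b) ∈ {u : Vertex | (openGraph η).Reachable v u}} with hD
  have hfin : D.Finite := hninf
  have hnonempty : D.Nonempty := hne
  obtain ⟨m, hmD, hmax⟩ := Set.Finite.exists_maximalFor id D hfin hnonempty
  simp only [id_eq] at hmax
  have hub : ∀ x ∈ D, x ≤ m := by
    intro x hx
    by_contra hlt
    have := hmax hx (by omega)
    omega
  have hRvm : (openGraph η).Reachable v (m, b) := hmD.2
  apply hη b m
  refine ⟨⟨?_, hmD.1⟩, ?_⟩
  · exact hinf.mono (fun x hx => hRvm.symm.trans hx)
  · intro x he hr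
    exact hub x ⟨he, hRvm.trans hr⟩
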